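/- Let f : [a,b] → ℝ be Hölder continuous of order r ∈ (0,1] with constant H ≥ 0, and let u : [a,b] → ℝ be of bounded variation on [a,b]. Then for all a ≤ t₀ ≤ x ≤ t₁ ≤ b, |∫ₐᵇ f du − [u(x) − u(a)]·f(t₀) − [u(b) − u(x)]·f(t₁)| ≤ H · max{ (x−a)/2 + |t₀ − (a+x)/2|, (b−x)/2 + |t₁ − (x+b)/2| }^r · V(u;[a,b]), where V(u;[a,b]) denotes the total variation of u on [a,b]. -/

import Mathlib

/-- A tagged partition of the interval `[a, b]`. -/
structure TaggedPartition (a b : ℝ) where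
  n : ℕ
  pts : ℕ → ℝ
  tag : ℕ → ℝ
  mono : ∀ i, pts i ≤ pts (i + 1)
  first : pts 0 = a
  last : pts n = b
  tag_mem : ∀ i, pts i ≤ tag i ∧ tag i ≤ pts (i + 1)

/-- The Riemann–Stieltjes sum of `f` with respect to `u` over a tagged partition. -/
def RSsum (f u : ℝ → ℝ) {a b : ℝ} (P : TaggedPartition a b) : ℝ :=
  ∑ i ∈ Finset.range P.n, f (P.tag i) * (u (P.pts (i + 1)) - u (P.pts i))

/-- `IsRSIntegral f u a b I` means the Riemann–Stieltjes integral `∫ₐᵇ f du` exists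
and equals `I`: Riemann–Stieltjes sums converge to `I` as the mesh tends to `0`. -/
def IsRSIntegral (f u : ℝ → ℝ) (a b I : ℝ) : Prop :=
  ∀ ε > 0, ∃ δ > 0, ∀ P : TaggedPartition a b,
    (∀ i < P.n, P.pts (i + 1) - P.pts i < δ) → |RSsum f u P - I| < ε

/-- The total (Jordan) variation of `u` on `[a, b]`. -/
noncomputable def totalVar (u : ℝ → ℝ) (a b : ℝ) : ℝ :=
  (eVariationOn u (Set.Icc a b)).toReal

-- variation sum bound
lemma var_sum_le (u : ℝ → ℝ) {a b : ℝ} (hu : BoundedVariationOn u (Set.Icc a b))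
    (P : TaggedPartition a b) :
    ∑ i ∈ Finset.range P.n, |u (P.pts (i + 1)) - u (P.pts i)| ≤ totalVar u a b := by
  have hmono : Monotone P.pts := monotone_nat_of_le_succ P.mono
  set q : ℕ → ℝ := fun i => P.pts (min i P.n) with hq
  have hmem : ∀ i ∈ Set.Icc 0 P.n, q i ∈ Set.Icc a b := by
    intro i _
    constructor
    · rw [← P.first]; exact hmono (Nat.zero_le _)
    · rw [← P.last]; exact hmono (min_le_right _ _)
  have hmo : MonotoneOn q (Set.Icc 0 P.n) := fun i _ j _ hij => hmono (min_le_min hij le_rfl)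
  have key := eVariationOn.sum_le_of_monotoneOn_Icc (f := u) (m := 0) (n := P.n) hmo hmem
  have hsum : ∀ i ∈ Finset.range P.n,
      edist (u (q (i + 1))) (u (q i)) = ENNReal.ofReal |u (P.pts (i + 1)) - u (P.pts i)| := by
    intro i hi
    rw [Finset.mem_range] at hi
    have h1 : min (i + 1) P.n = i + 1 := min_eq_left hi
    have h2 : min i P.n = i := min_eq_left hi.le
    simp only [hq, h1, h2, edist_dist, Real.dist_eq]
  have : (∑ i ∈ Finset.range P.n, edist (u (q (i + 1))) (u (q i))).toReal
      ≤ totalVar u a b := by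
    apply ENNReal.toReal_mono hu
    rw [Finset.range_eq_Ico]; exact key
  rw [Finset.sum_congr rfl hsum] at this
  rwa [ENNReal.toReal_sum (fun i _ => ENNReal.ofReal_ne_top),
    Finset.sum_congr rfl (fun i _ => ENNReal.toReal_ofReal (abs_nonneg _))] at this

lemma rssum_close (a b H r t0 x t1 : ℝ) (f u : ℝ → ℝ)
    (hr : 0 ≤ r) (hH : 0 ≤ H)
    (hf : ∀ s ∈ Set.Icc a b, ∀ t ∈ Set.Icc a b, |f s - f t| ≤ H * |s - t| ^ r)
    (hu : BoundedVariationOn u (Set.Icc a b))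
    (ht0 : a ≤ t0) (ht0x : t0 ≤ x) (hxt1 : x ≤ t1) (ht1 : t1 ≤ b)
    (P : TaggedPartition a b) (k : ℕ) (hk : k ≤ P.n) (hpk : P.pts k = x) :
    |RSsum f u P - ((u x - u a) * f t0 + (u b - u x) * f t1)| ≤
      H * (max ((x - a) / 2 + |t0 - (a + x) / 2|) ((b - x) / 2 + |t1 - (x + b) / 2|)) ^ r *
        totalVar u a b := by
  have hmono : Monotone P.pts := monotone_nat_of_le_succ P.mono
  set M := max ((x - a) / 2 + |t0 - (a + x) / 2|) ((b - x) / 2 + |t1 - (x + b) / 2|) with hM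
  have hax : a ≤ x := le_trans ht0 ht0x
  have hxb : x ≤ b := le_trans hxt1 ht1
  have hM0 : 0 ≤ M := by
    have := abs_nonneg (t0 - (a + x) / 2)
    have : 0 ≤ (x - a) / 2 + |t0 - (a + x) / 2| := by linarith
    exact le_trans this (le_max_left _ _)
  set Δ : ℕ → ℝ := fun i => u (P.pts (i + 1)) - u (P.pts i) with hΔ
  set C := H * M ^ r with hC
  have hC0 : 0 ≤ C := mul_nonneg hH (Real.rpow_nonneg hM0 r)
  -- pointwise bounds
  have bound1 : ∀ i ∈ Finset.range k, |f (P.tag i) - f t0| ≤ C := by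
    intro i hi
    rw [Finset.mem_range] at hi
    have h1 : a ≤ P.tag i := by
      have := hmono (Nat.zero_le i)
      rw [P.first] at this
      exact le_trans this (P.tag_mem i).1
    have h2 : P.tag i ≤ x := by
      have := hmono (show i + 1 ≤ k from hi)
      rw [hpk] at this
      exact le_trans (P.tag_mem i).2 this
    have habs : |P.tag i - t0| ≤ M := by
      apply le_trans _ (le_max_left _ _)
      rcases abs_cases (t0 - (a + x) / 2) with ⟨he, _⟩ | ⟨he, _⟩ <;>
        rcases abs_cases (P.tag i - t0) with ⟨he2, _⟩ | ⟨he2, _⟩ <;> linarith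
    calc |f (P.tag i) - f t0| ≤ H * |P.tag i - t0| ^ r :=
          hf _ ⟨h1, le_trans h2 hxb⟩ _ ⟨ht0, le_trans ht0x hxb⟩
      _ ≤ C := mul_le_mul_of_nonneg_left (Real.rpow_le_rpow (abs_nonneg _) habs hr) hH
  have bound2 : ∀ i ∈ Finset.Ico k P.n, |f (P.tag i) - f t1| ≤ C := by
    intro i hi
    rw [Finset.mem_Ico] at hi
    have h1 : x ≤ P.tag i := by
      have := hmono hi.1
      rw [hpk] at this
      exact le_trans this (P.tag_mem i).1
    have h2 : P.tag i ≤ b := by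
      have := hmono (show i + 1 ≤ P.n from hi.2)
      rw [P.last] at this
      exact le_trans (P.tag_mem i).2 this
    have habs : |P.tag i - t1| ≤ M := by
      apply le_trans _ (le_max_right _ _)
      rcases abs_cases (t1 - (x + b) / 2) with ⟨he, _⟩ | ⟨he, _⟩ <;>
        rcases abs_cases (P.tag i - t1) with ⟨he2, _⟩ | ⟨he2, _⟩ <;> linarith
    calc |f (P.tag i) - f t1| ≤ H * |P.tag i - t1| ^ r :=
          hf _ ⟨le_trans hax h1, h2⟩ _ ⟨le_trans hax hxt1, ht1⟩
      _ ≤ C := mul_le_mul_of_nonneg_left (Real.rpow_le_rpow (abs_nonneg _) habs hr) hH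
  -- telescoping identities
  have h1 : ∑ i ∈ Finset.range k, Δ i = u x - u a := by
    rw [hΔ, Finset.sum_range_sub (fun i => u (P.pts i)) k, hpk, P.first]
  have hn : ∑ i ∈ Finset.range P.n, Δ i = u b - u a := by
    rw [hΔ, Finset.sum_range_sub (fun i => u (P.pts i)) P.n, P.last, P.first]
  have h2 : ∑ i ∈ Finset.Ico k P.n, Δ i = u b - u x := by
    have hs : (∑ i ∈ Finset.range k, Δ i) + ∑ i ∈ Finset.Ico k P.n, Δ i
        = ∑ i ∈ Finset.range P.n, Δ i := by
      simp only [Finset.range_eq_Ico]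
      exact Finset.sum_Ico_consecutive _ (Nat.zero_le k) hk
    linarith
  -- rewrite the difference
  have hsplit : RSsum f u P - ((u x - u a) * f t0 + (u b - u x) * f t1) =
      (∑ i ∈ Finset.range k, (f (P.tag i) - f t0) * Δ i) +
      (∑ i ∈ Finset.Ico k P.n, (f (P.tag i) - f t1) * Δ i) := by
    have hs : RSsum f u P = (∑ i ∈ Finset.range k, f (P.tag i) * Δ i) +
        (∑ i ∈ Finset.Ico k P.n, f (P.tag i) * Δ i) := by
      rw [RSsum, Finset.range_eq_Ico,
        ← Finset.sum_Ico_consecutive (fun i => f (P.tag i) * Δ i) (Nat.zero_le k) hk,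
        ← Finset.range_eq_Ico]
    rw [hs]
    simp only [sub_mul, Finset.sum_sub_distrib, ← Finset.mul_sum, h1, h2]
    ring
  rw [hsplit]
  have e1 : |∑ i ∈ Finset.range k, (f (P.tag i) - f t0) * Δ i| ≤
      ∑ i ∈ Finset.range k, C * |Δ i| := by
    refine le_trans (Finset.abs_sum_le_sum_abs _ _) (Finset.sum_le_sum fun i hi => ?_)
    rw [abs_mul]
    exact mul_le_mul_of_nonneg_right (bound1 i hi) (abs_nonneg _)
  have e2 : |∑ i ∈ Finset.Ico k P.n, (f (P.tag i) - f t1) * Δ i| ≤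
      ∑ i ∈ Finset.Ico k P.n, C * |Δ i| := by
    refine le_trans (Finset.abs_sum_le_sum_abs _ _) (Finset.sum_le_sum fun i hi => ?_)
    rw [abs_mul]
    exact mul_le_mul_of_nonneg_right (bound2 i hi) (abs_nonneg _)
  have etot : (∑ i ∈ Finset.range k, C * |Δ i|) + (∑ i ∈ Finset.Ico k P.n, C * |Δ i|) =
      C * ∑ i ∈ Finset.range P.n, |Δ i| := by
    simp only [Finset.mul_sum, Finset.range_eq_Ico]
    exact Finset.sum_Ico_consecutive _ (Nat.zero_le k) hk
  calc |(∑ i ∈ Finset.range k, (f (P.tag i) - f t0) * Δ i) +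
        (∑ i ∈ Finset.Ico k P.n, (f (P.tag i) - f t1) * Δ i)|
      ≤ (∑ i ∈ Finset.range k, C * |Δ i|) + (∑ i ∈ Finset.Ico k P.n, C * |Δ i|) :=
        le_trans (abs_add_le _ _) (add_le_add e1 e2)
    _ = C * ∑ i ∈ Finset.range P.n, |Δ i| := etot
    _ ≤ C * totalVar u a b := mul_le_mul_of_nonneg_left (var_sum_le u hu P) hC0

theorem two_point_quadrature_bounded_variation
    (a b H r t0 x t1 I : ℝ) (f u : ℝ → ℝ)
    (hr : 0 < r) (hr1 : r ≤ 1) (hH : 0 ≤ H)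
    (hf : ∀ s ∈ Set.Icc a b, ∀ t ∈ Set.Icc a b, |f s - f t| ≤ H * |s - t| ^ r)
    (hu : BoundedVariationOn u (Set.Icc a b))
    (ht0 : a ≤ t0) (ht0x : t0 ≤ x) (hxt1 : x ≤ t1) (ht1 : t1 ≤ b)
    (hI : IsRSIntegral f u a b I) :
    |I - (u x - u a) * f t0 - (u b - u x) * f t1| ≤
      H * (max ((x - a) / 2 + |t0 - (a + x) / 2|) ((b - x) / 2 + |t1 - (x + b) / 2|)) ^ r *
        totalVar u a b := by
  set B := H * (max ((x - a) / 2 + |t0 - (a + x) / 2|) ((b - x) / 2 + |t1 - (x + b) / 2|)) ^ r *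
    totalVar u a b with hB
  have hax : a ≤ x := le_trans ht0 ht0x
  have hxb : x ≤ b := le_trans hxt1 ht1
  refine le_of_forall_pos_le_add fun ε hε => ?_
  obtain ⟨δ, hδ, hP⟩ := hI ε hε
  -- choose N
  obtain ⟨n, hn⟩ := exists_nat_gt (max (x - a) (b - x) / δ)
  set N := n + 1 with hNdef
  have hN0 : (0 : ℝ) < N := by positivity
  have hNgt : max (x - a) (b - x) / δ < N := lt_of_lt_of_le hn (by exact_mod_cast Nat.le_succ n)
  have hcδ : (x - a) / N < δ := by
    rw [div_lt_iff₀ hN0]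
    have h1 : max (x - a) (b - x) < N * δ := by
      rw [div_lt_iff₀ hδ] at hNgt; linarith
    calc x - a ≤ max (x - a) (b - x) := le_max_left _ _
      _ < N * δ := h1
      _ = δ * N := mul_comm _ _
  have hdδ : (b - x) / N < δ := by
    rw [div_lt_iff₀ hN0]
    have h1 : max (x - a) (b - x) < N * δ := by
      rw [div_lt_iff₀ hδ] at hNgt; linarith
    calc b - x ≤ max (x - a) (b - x) := le_max_right _ _
      _ < N * δ := h1
      _ = δ * N := mul_comm _ _
  set c := (x - a) / N with hc
  set d := (b - x) / N with hd
  have hc0 : 0 ≤ c := div_nonneg (by linarith) hN0.le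
  have hd0 : 0 ≤ d := div_nonneg (by linarith) hN0.le
  set ps : ℕ → ℝ := fun i => if i ≤ N then a + i * c else x + ((i - N : ℕ) : ℝ) * d with hps
  have psle : ∀ i ≤ N, ps i = a + i * c := fun i hi => if_pos hi
  have psN : ps N = x := by
    rw [psle N le_rfl, hc]
    field_simp
    ring
  have psge : ∀ i, N ≤ i → ps i = x + ((i - N : ℕ) : ℝ) * d := by
    intro i hi
    rcases eq_or_lt_of_le hi with h | h
    · rw [← h, psN, Nat.sub_self]; simp
    · rw [hps]; simp only [if_neg (not_le.mpr h)]
  have mono : ∀ i, ps i ≤ ps (i + 1) := by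
    intro i
    rcases lt_or_ge i N with h | h
    · rw [psle i h.le, psle (i + 1) h]
      push_cast
      nlinarith
    · rw [psge i h, psge (i + 1) (le_trans h (Nat.le_succ i))]
      have : ((i - N : ℕ) : ℝ) ≤ ((i + 1 - N : ℕ) : ℝ) := by
        exact_mod_cast Nat.sub_le_sub_right (Nat.le_succ i) N
      nlinarith
  have hmesh : ∀ i < 2 * N, ps (i + 1) - ps i < δ := by
    intro i hi
    rcases lt_or_ge i N with h | h
    · rw [psle i h.le, psle (i + 1) h]
      push_cast
      calc a + ((i : ℝ) + 1) * c - (a + i * c) = c := by ring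
        _ < δ := hcδ
    · rw [psge i h, psge (i + 1) (le_trans h (Nat.le_succ i))]
      have hcast : ((i + 1 - N : ℕ) : ℝ) = ((i - N : ℕ) : ℝ) + 1 := by
        rw [Nat.succ_sub h]; push_cast; ring
      rw [hcast]
      calc x + (((i - N : ℕ) : ℝ) + 1) * d - (x + ((i - N : ℕ) : ℝ) * d) = d := by ring
        _ < δ := hdδ
  set P : TaggedPartition a b :=
    { n := 2 * N
      pts := ps
      tag := ps
      mono := mono
      first := by rw [psle 0 (Nat.zero_le N)]; simp
      last := by
        rw [psge (2 * N) (by omega)]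
        have : ((2 * N - N : ℕ) : ℝ) = (N : ℝ) := by
          congr 1; omega
        rw [this, hd]
        field_simp
        ring
      tag_mem := fun i => ⟨le_rfl, mono i⟩ } with hPdef
  have hclose := rssum_close a b H r t0 x t1 f u hr.le hH hf hu ht0 ht0x hxt1 ht1 P N
    (by show N ≤ 2 * N; omega) (by simpa [hPdef] using psN)
  have hnear := hP P (by simpa [hPdef] using hmesh)
  have htri : |I - (u x - u a) * f t0 - (u b - u x) * f t1| ≤
      |RSsum f u P - I| + |RSsum f u P - ((u x - u a) * f t0 + (u b - u x) * f t1)| := by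
    have he : I - (u x - u a) * f t0 - (u b - u x) * f t1 =
        -(RSsum f u P - I) + (RSsum f u P - ((u x - u a) * f t0 + (u b - u x) * f t1)) := by
      ring
    rw [he]
    exact le_trans (abs_add_le _ _) (by rw [abs_neg])
  linarith
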